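/- Let Φ=(G,W,D) and Φ̃=(G,W̃,D̃) be two positive SNNs on the same network graph G, and suppose there exists b>0 such that every synaptic weight of Φ and of Φ̃ is at least b. Let L be the graph depth of G. Then for every t ∈ ℝ^{d_in}: ‖R(Φ)(t) − R(Φ̃)(t)‖_{ℓ∞} ≤ L · (1 + 1/b²) · ‖Φ − Φ̃‖_{ℓ∞}. -/

import Mathlib

open scoped BigOperators

noncomputable section

/-- The ReLU function. -/
def relu (t : ℝ) : ℝ := max t 0

/-- A network graph: a finite directed acyclic graph without isolated nodes. -/
structure NetworkGraph (V : Type) [Fintype V] [DecidableEq V] where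
  E : Finset (V × V)
  acyclic : WellFounded (fun u v : V => (u, v) ∈ E)
  noIsolated : ∀ v : V, (∃ u, (u, v) ∈ E) ∨ (∃ u, (v, u) ∈ E)

variable {V : Type} [Fintype V] [DecidableEq V]

/-- Input nodes: nodes with no incoming edges. -/
def NetworkGraph.Vin (G : NetworkGraph V) : Set V := {v | ∀ u, (u, v) ∉ G.E}

/-- Output nodes: nodes with no outgoing edges. -/
def NetworkGraph.Vout (G : NetworkGraph V) : Set V := {v | ∀ u, (v, u) ∉ G.E}

/-- There exists a directed path with `n` edges in `G`. -/
def NetworkGraph.HasPathLen (G : NetworkGraph V) (n : ℕ) : Prop :=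
  ∃ p : Fin (n + 1) → V, ∀ i : Fin n, (p i.castSucc, p i.succ) ∈ G.E

/-- The graph depth (length of the longest directed path) of `G` equals `L`. -/
def NetworkGraph.DepthEq (G : NetworkGraph V) (L : ℕ) : Prop :=
  G.HasPathLen L ∧ ∀ n : ℕ, G.HasPathLen n → n ≤ L

/-- The potential of node `v` at time `s`, given presynaptic spike times `t`,
weights `w` and delays `d`. -/
def potential (G : NetworkGraph V) (w d : V × V → ℝ) (t : V → ℝ) (v : V) (s : ℝ) : ℝ :=
  ∑ u ∈ Finset.univ.filter (fun u => (u, v) ∈ G.E), w (u, v) * relu (s - t u - d (u, v))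

/-- `t` is a consistent assignment of spike times extending the input spike times `tin`:
on input nodes it agrees with `tin`, and at every non-input node `v` the spike time `t v`
is the minimum (which exists) of the set of times at which the potential reaches `1`. -/
def IsSpikeMap (G : NetworkGraph V) (w d : V × V → ℝ) (tin : V → ℝ) (t : V → ℝ) : Prop :=
  (∀ v ∈ G.Vin, t v = tin v) ∧
  ∀ v : V, v ∉ G.Vin → IsLeast {s : ℝ | potential G w d t v s = 1} (t v)

open Classical in
/-- The spike-time assignment determined by the input spike times `tin` (via choice). -/
def spikeMap (G : NetworkGraph V) (w d : V × V → ℝ) (tin : V → ℝ) : V → ℝ :=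
  if h : ∃ t, IsSpikeMap G w d tin t then h.choose else fun _ => 0

/-- Realization of a (positive) SNN, given enumerations of input and output nodes. -/
def snnReal (G : NetworkGraph V) (w d : V × V → ℝ) {din dout : ℕ}
    (ein : Fin din → V) (eout : Fin dout → V) (x : Fin din → ℝ) : Fin dout → ℝ :=
  fun j => spikeMap G w d (Function.extend ein x (fun _ => 0)) (eout j)

/-- Frobenius norm of a real matrix. -/
def frobNorm {m n : ℕ} (A : Matrix (Fin m) (Fin n) ℝ) : ℝ :=
  Real.sqrt (∑ i, ∑ j, (A i j) ^ 2)

/-- Realization of an affine SNN: affine encoder, positive SNN, affine decoder. -/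
def affineReal (G : NetworkGraph V) (w d : V × V → ℝ) {din dout d0 d1 : ℕ}
    (ein : Fin din → V) (eout : Fin dout → V)
    (Win : Matrix (Fin din) (Fin d0) ℝ) (bin : Fin din → ℝ)
    (Wout : Matrix (Fin d1) (Fin dout) ℝ) (bout : Fin d1 → ℝ)
    (x : Fin d0 → ℝ) : Fin d1 → ℝ :=
  Wout.mulVec (snnReal G w d ein eout (Win.mulVec x + bin)) + bout

/-- ℓ∞ distance of the parameters (weights and delays) of two SNNs on the same graph. -/
def paramDist (G : NetworkGraph V) (w d w' d' : V × V → ℝ) : ℝ :=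
  sSup ((fun e => max |w e - w' e| |d e - d' e|) '' (G.E : Set (V × V)))

/-- An affine spiking neural network with input dimension `d0` and output dimension `d1`:
a positive SNN together with enumerations of its input/output nodes and an affine
encoder/decoder pair. -/
structure AffSNN (d0 d1 : ℕ) where
  n : ℕ
  din : ℕ
  dout : ℕ
  G : NetworkGraph (Fin n)
  w : Fin n × Fin n → ℝ
  dl : Fin n × Fin n → ℝ
  ein : Fin din → Fin n
  eout : Fin dout → Fin n
  Win : Matrix (Fin din) (Fin d0) ℝ
  bin : Fin din → ℝ
  Wout : Matrix (Fin d1) (Fin dout) ℝ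
  bout : Fin d1 → ℝ
  w_pos : ∀ e ∈ G.E, 0 < w e
  dl_nonneg : ∀ e ∈ G.E, 0 ≤ dl e
  ein_inj : Function.Injective ein
  ein_range : Set.range ein = G.Vin
  eout_inj : Function.Injective eout
  eout_range : Set.range eout = G.Vout

/-- Realization of an affine SNN. -/
def AffSNN.real {d0 d1 : ℕ} (Ψ : AffSNN d0 d1) : (Fin d0 → ℝ) → Fin d1 → ℝ :=
  affineReal Ψ.G Ψ.w Ψ.dl Ψ.ein Ψ.eout Ψ.Win Ψ.bin Ψ.Wout Ψ.bout

/-- Size of an affine SNN: the number of nonzero scalar entries of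
`(W, D, W_in, W_out, b_in, b_out)`. -/
def AffSNN.size {d0 d1 : ℕ} (Ψ : AffSNN d0 d1) : ℕ :=
  {e | e ∈ Ψ.G.E ∧ Ψ.w e ≠ 0}.ncard + {e | e ∈ Ψ.G.E ∧ Ψ.dl e ≠ 0}.ncard
    + {p : Fin Ψ.din × Fin d0 | Ψ.Win p.1 p.2 ≠ 0}.ncard
    + {p : Fin d1 × Fin Ψ.dout | Ψ.Wout p.1 p.2 ≠ 0}.ncard
    + {i : Fin Ψ.din | Ψ.bin i ≠ 0}.ncard + {i : Fin d1 | Ψ.bout i ≠ 0}.ncard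

/-- All scalar weights of the affine SNN are bounded above in absolute value by `C`. -/
def AffSNN.weightsBddAbove {d0 d1 : ℕ} (Ψ : AffSNN d0 d1) (C : ℝ) : Prop :=
  (∀ e ∈ Ψ.G.E, |Ψ.w e| ≤ C) ∧ (∀ e ∈ Ψ.G.E, |Ψ.dl e| ≤ C) ∧
  (∀ i j, |Ψ.Win i j| ≤ C) ∧ (∀ i, |Ψ.bin i| ≤ C) ∧
  (∀ i j, |Ψ.Wout i j| ≤ C) ∧ (∀ i, |Ψ.bout i| ≤ C)

/-- All synaptic weights of the affine SNN are bounded below by `c`. -/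
def AffSNN.synBddBelow {d0 d1 : ℕ} (Ψ : AffSNN d0 d1) (c : ℝ) : Prop :=
  ∀ e ∈ Ψ.G.E, c ≤ Ψ.w e

/-- Clipping to the interval `[0,1]`. -/
def clip01 (y : ℝ) : ℝ := max 0 (min 1 y)

/-- The hypothesis class of `[0,1]`-clipped realizations of affine SNNs on a fixed
network graph with parameters bounded as in `P*_SNN(G, d⃗; b, B)` (with `d1 = 1`). -/
def clippedClass (G : NetworkGraph V) {din dout : ℕ} (ein : Fin din → V) (eout : Fin dout → V)
    (b B : ℝ) (d0 : ℕ) : Set ((Fin d0 → ℝ) → ℝ) :=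
  { f | ∃ (Win : Matrix (Fin din) (Fin d0) ℝ) (bin : Fin din → ℝ)
        (w dl : V × V → ℝ) (Wout : Matrix (Fin 1) (Fin dout) ℝ) (bout : Fin 1 → ℝ),
      (∀ i j, Win i j ∈ Set.Icc (-B) B) ∧ (∀ i, bin i ∈ Set.Icc (-B) B) ∧
      (∀ e ∈ G.E, w e ∈ Set.Icc b B) ∧ (∀ e ∈ G.E, dl e ∈ Set.Icc 0 B) ∧
      (∀ i j, Wout i j ∈ Set.Icc (-B) B) ∧ (∀ i, bout i ∈ Set.Icc (-B) B) ∧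
      f = fun x => clip01 (affineReal G w dl ein eout Win bin Wout bout x 0) }

/-- The Lipschitz constant `L*` from the covering-number estimate. -/
def Lstar (d0 din dout L : ℕ) (b B : ℝ) : ℝ :=
  (dout : ℝ) * (2 * Real.sqrt din * d0 * B + B * L * (1 + 1 / b ^ 2)
    + 2 * B + L * (1 / b + B)) + 1

/-- A regular triangulation of a compact set `Ω ⊆ ℝ^{d0}`, with simplices recorded by
their vertex sets. -/
structure RegTriangulation (d0 : ℕ) (Ω : Set (Fin d0 → ℝ)) where
  nodes : Finset (Fin d0 → ℝ)
  faces : Finset (Finset (Fin d0 → ℝ))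
  nodes_sub : (nodes : Set (Fin d0 → ℝ)) ⊆ Ω
  card_face : ∀ S ∈ faces, S.card = d0 + 1
  indep : ∀ S ∈ faces, AffineIndependent ℝ ((↑) : {x // x ∈ S} → (Fin d0 → ℝ))
  face_nodes : ∀ S ∈ faces,
    (nodes : Set (Fin d0 → ℝ)) ∩ convexHull ℝ (S : Set (Fin d0 → ℝ)) = (S : Set (Fin d0 → ℝ))
  cover : Ω = ⋃ S ∈ faces, convexHull ℝ (S : Set (Fin d0 → ℝ))
  inter : ∀ S ∈ faces, ∀ S' ∈ faces,
    convexHull ℝ (S : Set (Fin d0 → ℝ)) ∩ convexHull ℝ (S' : Set (Fin d0 → ℝ))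
      = convexHull ℝ ((S ∩ S' : Finset (Fin d0 → ℝ)) : Set (Fin d0 → ℝ))

/-- Euclidean distance on `ℝ^{d0}` (realized as `Fin d0 → ℝ`). -/
def eudist {d0 : ℕ} (x y : Fin d0 → ℝ) : ℝ := Real.sqrt (∑ i, (x i - y i) ^ 2)

/-- Minimal mesh size: the minimal distance between two distinct nodes of a simplex. -/
def hmin {d0 : ℕ} {Ω : Set (Fin d0 → ℝ)} (T : RegTriangulation d0 Ω) : ℝ :=
  sInf { r | ∃ S ∈ T.faces, ∃ x ∈ S, ∃ y ∈ S, x ≠ y ∧ r = eudist x y }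

/-- Maximal mesh size: the maximal distance between two nodes of a simplex. -/
def hmax {d0 : ℕ} {Ω : Set (Fin d0 → ℝ)} (T : RegTriangulation d0 Ω) : ℝ :=
  sSup { r | ∃ S ∈ T.faces, ∃ x ∈ S, ∃ y ∈ S, r = eudist x y }

/-- `f` belongs to the linear finite element space `V_T`: it is continuous on `Ω` and
affine on each simplex of `T`. -/
def PiecewiseAffineOn {d0 : ℕ} {Ω : Set (Fin d0 → ℝ)} (T : RegTriangulation d0 Ω)
    (f : (Fin d0 → ℝ) → ℝ) : Prop :=
  ContinuousOn f Ω ∧ ∀ S ∈ T.faces, ∃ (a : Fin d0 → ℝ) (c : ℝ),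
    ∀ x ∈ convexHull ℝ (S : Set (Fin d0 → ℝ)), f x = ∑ i, a i * x i + c

/-- Admissibility of a compact domain: existence of quasi-uniform triangulations. -/
def Admissible (d0 : ℕ) (Ω : Set (Fin d0 → ℝ)) : Prop :=
  ∃ C1 C2 c2 : ℝ, 0 < C1 ∧ 0 < C2 ∧ 0 < c2 ∧
    ∀ N : ℕ, 0 < N → ∃ T : RegTriangulation d0 Ω,
      (T.faces.card : ℝ) ≤ C1 * N ∧
      c2 * (N : ℝ) ^ (-(1 : ℝ) / d0) ≤ hmin T ∧
      hmin T ≤ hmax T ∧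
      hmax T ≤ C2 * (N : ℝ) ^ (-(1 : ℝ) / d0)

/-- The `W^{s,∞}(Ω)` norm (for `C^s` functions): supremum over `Ω` of the norms of the
iterated derivatives of order at most `s`. -/
def sobNorm {d0 : ℕ} (s : ℕ) (Ω : Set (Fin d0 → ℝ)) (f : (Fin d0 → ℝ) → ℝ) : ℝ :=
  sSup { r | ∃ k ≤ s, ∃ x ∈ Ω, r = ‖iteratedFDeriv ℝ k f x‖ }

/-- The `L^∞(Ω)` norm. -/
def supNormOn {d0 : ℕ} (Ω : Set (Fin d0 → ℝ)) (f : (Fin d0 → ℝ) → ℝ) : ℝ :=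
  sSup ((fun x => |f x|) '' Ω)

/-- The Barron class `Γ_K`. -/
def BarronClass (d0 : ℕ) (K : ℝ) (f : (Fin d0 → ℝ) → ℝ) : Prop :=
  MeasureTheory.LocallyIntegrable f MeasureTheory.volume ∧
  ∃ g : (Fin d0 → ℝ) → ℂ, Measurable g ∧
    (∀ x, (f x : ℂ) = ∫ ξ, Complex.exp (Complex.I * ((∑ i, x i * ξ i : ℝ) : ℂ)) * g ξ) ∧
    (∫ ξ, eudist ξ 0 * ‖g ξ‖) ≤ K

end

noncomputable section Aux

variable {V : Type} [Fintype V] [DecidableEq V]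

lemma relu_nonneg (t : ℝ) : 0 ≤ relu t := le_max_right _ _

lemma potential_cont (G : NetworkGraph V) (w d : V × V → ℝ) (t : V → ℝ) (v : V) :
    Continuous (potential G w d t v) := by
  unfold potential relu
  exact continuous_finset_sum _ fun u _ =>
    continuous_const.mul
      (((continuous_id.sub continuous_const).sub continuous_const).max continuous_const)

lemma not_vin_iff {G : NetworkGraph V} {v : V} : v ∉ G.Vin ↔ ∃ u, (u, v) ∈ G.E := by
  simp [NetworkGraph.Vin]

end Aux
noncomputable section Aux2

variable {V : Type} [Fintype V] [DecidableEq V]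

/-- If the potential reaches `1` at `τ`, it equals `1` somewhere at or before `τ`. -/
lemma exists_potential_eq_one (G : NetworkGraph V) (w d : V × V → ℝ) (t : V → ℝ) (v : V)
    (hv : v ∉ G.Vin) (τ : ℝ) (hτ : 1 ≤ potential G w d t v τ) :
    ∃ s ≤ τ, potential G w d t v s = 1 := by
  obtain ⟨u0, hu0⟩ := not_vin_iff.mp hv
  set F := Finset.univ.filter (fun u => (u, v) ∈ G.E) with hF
  have hFne : F.Nonempty := ⟨u0, by simp [hF, hu0]⟩
  set s0 : ℝ := (F.inf' hFne fun u => t u + d (u, v)) ⊓ τ with hs0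
  have h0 : potential G w d t v s0 = 0 := by
    apply Finset.sum_eq_zero
    intro u hu
    have h1 : s0 ≤ t u + d (u, v) :=
      le_trans inf_le_left (Finset.inf'_le _ hu)
    have : s0 - t u - d (u, v) ≤ 0 := by linarith
    rw [relu, max_eq_right this, mul_zero]
  have hle : s0 ≤ τ := inf_le_right
  have := intermediate_value_Icc hle ((potential_cont G w d t v).continuousOn)
  have h1 : (1 : ℝ) ∈ Set.Icc (potential G w d t v s0) (potential G w d t v τ) := by
    rw [h0]; exact ⟨zero_le_one, hτ⟩
  obtain ⟨s, hs, hseq⟩ := this h1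
  exact ⟨s, hs.2, hseq⟩

/-- Below the earliest presynaptic arrival the potential vanishes, so values in the
spike set are bounded below. -/
lemma spike_set_bddBelow (G : NetworkGraph V) (w d : V × V → ℝ) (t : V → ℝ) (v : V)
    (hv : v ∉ G.Vin) : BddBelow {s : ℝ | potential G w d t v s = 1} := by
  obtain ⟨u0, hu0⟩ := not_vin_iff.mp hv
  set F := Finset.univ.filter (fun u => (u, v) ∈ G.E) with hF
  have hFne : F.Nonempty := ⟨u0, by simp [hF, hu0]⟩
  refine ⟨F.inf' hFne fun u => t u + d (u, v), fun s hs => ?_⟩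
  by_contra hlt
  push_neg at hlt
  have h0 : potential G w d t v s = 0 := by
    apply Finset.sum_eq_zero
    intro u hu
    have h1 : s ≤ t u + d (u, v) := le_trans hlt.le (Finset.inf'_le _ hu)
    have : s - t u - d (u, v) ≤ 0 := by linarith
    rw [relu, max_eq_right this, mul_zero]
  rw [Set.mem_setOf_eq, h0] at hs
  exact one_ne_zero hs.symm

/-- For a non-input node, the set of times at which the potential reaches `1` has a
least element. -/
lemma exists_isLeast_spike (G : NetworkGraph V) (w d : V × V → ℝ) (t : V → ℝ) (v : V)
    (hv : v ∉ G.Vin) (b : ℝ) (hb : 0 < b) (hw : ∀ e ∈ G.E, b ≤ w e) :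
    ∃ m, IsLeast {s : ℝ | potential G w d t v s = 1} m := by
  obtain ⟨u0, hu0⟩ := not_vin_iff.mp hv
  set F := Finset.univ.filter (fun u => (u, v) ∈ G.E) with hF
  have hu0F : u0 ∈ F := by simp [hF, hu0]
  set τ : ℝ := t u0 + d (u0, v) + 1 / b with hτdef
  have hτ : 1 ≤ potential G w d t v τ := by
    have hterm : 1 ≤ w (u0, v) * relu (τ - t u0 - d (u0, v)) := by
      have hx : τ - t u0 - d (u0, v) = 1 / b := by ring
      rw [hx, relu, max_eq_left (by positivity)]
      have hwb := hw _ hu0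
      rw [mul_one_div, le_div_iff₀ hb, one_mul]
      exact hwb
    refine le_trans hterm ?_
    unfold potential
    refine Finset.single_le_sum (f := fun u => w (u, v) * relu (τ - t u - d (u, v))) (fun u hu => ?_) hu0F
    exact mul_nonneg (le_trans hb.le (hw _ (by simpa [hF] using hu))) (relu_nonneg _)
  obtain ⟨s, _, hs⟩ := exists_potential_eq_one G w d t v hv τ hτ
  have hne : {s : ℝ | potential G w d t v s = 1}.Nonempty := ⟨s, hs⟩
  have hbdd := spike_set_bddBelow G w d t v hv
  have hclosed : IsClosed {s : ℝ | potential G w d t v s = 1} :=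
    isClosed_singleton.preimage (potential_cont G w d t v)
  exact ⟨_, hclosed.csInf_mem hne hbdd, fun x hx => csInf_le hbdd hx⟩

end Aux2
noncomputable section Aux3

variable {V : Type} [Fintype V] [DecidableEq V]

open Classical in
/-- Spike map construction by well-founded recursion along the edges. -/
def spikeFix (G : NetworkGraph V) (w d : V × V → ℝ) (tin : V → ℝ) : V → ℝ :=
  G.acyclic.fix (fun v ih =>
    if v ∈ G.Vin then tin v
    else sInf {s : ℝ | ∑ u ∈ Finset.univ.filter (fun u => (u, v) ∈ G.E),
        w (u, v) * relu (s - (if h : (u, v) ∈ G.E then ih u h else 0) - d (u, v)) = 1})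

open Classical in
lemma spikeFix_eq (G : NetworkGraph V) (w d : V × V → ℝ) (tin : V → ℝ) (v : V) :
    spikeFix G w d tin v =
      if v ∈ G.Vin then tin v
      else sInf {s : ℝ | potential G w d (spikeFix G w d tin) v s = 1} := by
  have h := G.acyclic.fix_eq (fun v ih =>
    if v ∈ G.Vin then tin v
    else sInf {s : ℝ | ∑ u ∈ Finset.univ.filter (fun u => (u, v) ∈ G.E),
        w (u, v) * relu (s - (if h : (u, v) ∈ G.E then ih u h else 0) - d (u, v)) = 1}) v
  rw [spikeFix, h]
  by_cases hv : v ∈ G.Vin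
  · simp [hv]
  · simp only [if_neg hv]
    congr 1
    ext s
    simp only [Set.mem_setOf_eq, potential]
    have hsum : ∀ s : ℝ, (∑ u ∈ Finset.univ.filter (fun u => (u, v) ∈ G.E),
        w (u, v) * relu ((s - if h : (u, v) ∈ G.E then
          (fun y (_ : (y, v) ∈ G.E) => spikeFix G w d tin y) u h else 0) - d (u, v)))
        = potential G w d (spikeFix G w d tin) v s := by
      intro s
      refine Finset.sum_congr rfl fun u hu => ?_
      have he : (u, v) ∈ G.E := (Finset.mem_filter.mp hu).2
      rw [dif_pos he]
    exact iff_of_eq (congrArg (fun x => x = (1:ℝ)) (hsum s))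

lemma exists_spikeMap (G : NetworkGraph V) (w d : V × V → ℝ) (b : ℝ) (hb : 0 < b)
    (hw : ∀ e ∈ G.E, b ≤ w e) (tin : V → ℝ) : ∃ t, IsSpikeMap G w d tin t := by
  refine ⟨spikeFix G w d tin, fun v hv => by rw [spikeFix_eq, if_pos hv], fun v hv => ?_⟩
  obtain ⟨m, hm⟩ := exists_isLeast_spike G w d (spikeFix G w d tin) v hv b hb hw
  have : spikeFix G w d tin v = m := by
    rw [spikeFix_eq, if_neg hv, hm.csInf_eq]
  rw [this]; exact hm
end Aux3
noncomputable section Aux4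

variable {V : Type} [Fintype V] [DecidableEq V]

/-- There is a path of length `n` ending at `v`. -/
def PathEndLen (G : NetworkGraph V) (v : V) (n : ℕ) : Prop :=
  ∃ p : Fin (n + 1) → V, (∀ i : Fin n, (p i.castSucc, p i.succ) ∈ G.E) ∧ p (Fin.last n) = v

/-- The maximal length of a path ending at `v`. -/
def nodeDepth (G : NetworkGraph V) (v : V) : ℕ := sSup {n | PathEndLen G v n}

lemma pathEndLen_zero (G : NetworkGraph V) (v : V) : PathEndLen G v 0 :=
  ⟨fun _ => v, fun i => absurd i.2 (by simp), rfl⟩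

lemma pathEndLen_hasPathLen {G : NetworkGraph V} {v : V} {n : ℕ} (h : PathEndLen G v n) :
    G.HasPathLen n := ⟨h.choose, h.choose_spec.1⟩

lemma pathEndLen_bddAbove (G : NetworkGraph V) (v : V) {L : ℕ} (hL : G.DepthEq L) :
    BddAbove {n | PathEndLen G v n} :=
  ⟨L, fun n hn => hL.2 n (pathEndLen_hasPathLen hn)⟩

lemma nodeDepth_le (G : NetworkGraph V) (v : V) {L : ℕ} (hL : G.DepthEq L) :
    nodeDepth G v ≤ L :=
  csSup_le ⟨0, pathEndLen_zero G v⟩ fun n hn => hL.2 n (pathEndLen_hasPathLen hn)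

lemma nodeDepth_lt {G : NetworkGraph V} {u v : V} (he : (u, v) ∈ G.E) {L : ℕ}
    (hL : G.DepthEq L) : nodeDepth G u + 1 ≤ nodeDepth G v := by
  have hne : {n | PathEndLen G u n}.Nonempty := ⟨0, pathEndLen_zero G u⟩
  set m := nodeDepth G u with hm
  have hmem : PathEndLen G u m := Nat.sSup_mem hne (pathEndLen_bddAbove G u hL)
  obtain ⟨p, hp, hpl⟩ := hmem
  have hnew : PathEndLen G v (m + 1) := by
    refine ⟨fun i => if h : (i : ℕ) ≤ m then p ⟨i, by omega⟩ else v, fun i => ?_, ?_⟩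
    · dsimp only
      by_cases h : (i : ℕ) < m
      · rw [dif_pos (by simp only [Fin.coe_castSucc]; omega),
          dif_pos (by simp only [Fin.val_succ]; omega)]
        convert hp ⟨(i : ℕ), h⟩ using 2 <;> exact congrArg p (Fin.ext rfl)
      · have hi : (i : ℕ) = m := by omega
        rw [dif_pos (by simp only [Fin.coe_castSucc]; omega),
          dif_neg (by simp only [Fin.val_succ]; omega)]
        have hpu : p ⟨(i.castSucc : ℕ), by simp only [Fin.coe_castSucc]; omega⟩ = u :=
          (congrArg p (Fin.val_injective (by simp [Fin.last, hi]))).trans hpl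
        rw [hpu]; exact he
    · dsimp only
      rw [dif_neg (by simp [Fin.last])]
  exact le_csSup (pathEndLen_bddAbove G v hL) hnew

lemma nodeDepth_pos {G : NetworkGraph V} {v : V} (hv : v ∉ G.Vin) {L : ℕ}
    (hL : G.DepthEq L) : 1 ≤ nodeDepth G v := by
  obtain ⟨u, hu⟩ := not_vin_iff.mp hv
  have := nodeDepth_lt hu hL
  omega

end Aux4
noncomputable section Aux5

variable {V : Type} [Fintype V] [DecidableEq V]

lemma onesided (G : NetworkGraph V) (w d w' d' : V × V → ℝ) (b : ℝ) (hb : 0 < b)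
    (hw : ∀ e ∈ G.E, b ≤ w e) (hw' : ∀ e ∈ G.E, b ≤ w' e)
    (ε : ℝ) (hε : 0 ≤ ε)
    (hwε : ∀ e ∈ G.E, |w e - w' e| ≤ ε) (hdε : ∀ e ∈ G.E, |d e - d' e| ≤ ε)
    (L : ℕ) (hL : G.DepthEq L)
    (tin t t' : V → ℝ) (ht : IsSpikeMap G w d tin t) (ht' : IsSpikeMap G w' d' tin t')
    (v : V) :
    t' v ≤ t v + (nodeDepth G v : ℝ) * (1 + 1 / b ^ 2) * ε := by
  induction v using WellFounded.induction G.acyclic with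
  | _ v ih =>
  set C : ℝ := 1 + 1 / b ^ 2 with hC
  have hC0 : 0 ≤ C := by positivity
  by_cases hv : v ∈ G.Vin
  · rw [ht.1 v hv, ht'.1 v hv]
    nlinarith [mul_nonneg (mul_nonneg (Nat.cast_nonneg (nodeDepth G v)) hC0) hε]
  · -- non-input node
    have hdv1 : 1 ≤ nodeDepth G v := nodeDepth_pos hv hL
    set δ : ℝ := ((nodeDepth G v : ℝ) - 1) * C * ε with hδ
    have hδ0 : 0 ≤ δ := by
      have : (1 : ℝ) ≤ (nodeDepth G v : ℝ) := by exact_mod_cast hdv1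
      have := mul_nonneg (mul_nonneg (by linarith : (0:ℝ) ≤ (nodeDepth G v : ℝ) - 1) hC0) hε
      linarith
    set τ : ℝ := t v + (nodeDepth G v : ℝ) * C * ε with hτ
    have hτδ : τ = t v + δ + C * ε := by rw [hτ, hδ]; ring
    -- predecessor bound
    have hpred : ∀ u, (u, v) ∈ G.E → t' u ≤ t u + δ := by
      intro u hu
      have h1 := ih u hu
      have h2 : (nodeDepth G u : ℝ) ≤ (nodeDepth G v : ℝ) - 1 := by
        have := nodeDepth_lt hu hL
        have : (nodeDepth G u : ℝ) + 1 ≤ (nodeDepth G v : ℝ) := by exact_mod_cast this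
        linarith
      have h3 : (nodeDepth G u : ℝ) * C * ε ≤ ((nodeDepth G v : ℝ) - 1) * C * ε := by
        have := mul_nonneg hC0 hε
        nlinarith
      rw [hδ]; linarith
    have hP1 : potential G w d t v (t v) = 1 := (ht.2 v hv).1
    -- each term of the potential at `t v` is at most 1
    have hterm_le : ∀ u ∈ Finset.univ.filter (fun u => (u, v) ∈ G.E),
        w (u, v) * relu (t v - t u - d (u, v)) ≤ 1 := by
      intro u hu
      rw [← hP1]
      refine Finset.single_le_sum
        (f := fun u => w (u, v) * relu (t v - t u - d (u, v))) (fun x hx => ?_) hu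
      exact mul_nonneg
        (le_trans hb.le (hw _ (Finset.mem_filter.mp hx).2)) (relu_nonneg _)
    -- the perturbed potential at time τ is at least 1
    have hPτ : 1 ≤ potential G w' d' t' v τ := by
      rw [← hP1]
      refine Finset.sum_le_sum fun u hu => ?_
      have he : (u, v) ∈ G.E := (Finset.mem_filter.mp hu).2
      set x : ℝ := t v - t u - d (u, v) with hx
      set y : ℝ := τ - t' u - d' (u, v) with hy
      have hyx : x + ε / b ^ 2 ≤ y := by
        have h1 := hpred u he
        have h2 : d' (u, v) - d (u, v) ≤ ε := by
          have := hdε _ he; rw [abs_le] at this; linarith [this.1]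
        rw [hx, hy, hτδ, hC]
        have : ε * (1 / b ^ 2) = ε / b ^ 2 := by ring
        nlinarith
      have hw'b : b ≤ w' (u, v) := hw' _ he
      have hww' : w (u, v) - w' (u, v) ≤ ε := by
        have := hwε _ he; rw [abs_le] at this; linarith [this.1, this.2]
      by_cases hx0 : x ≤ 0
      · have : relu x = 0 := max_eq_right hx0
        rw [this, mul_zero]
        exact mul_nonneg (le_trans hb.le hw'b) (relu_nonneg _)
      · push_neg at hx0
        have hrx : relu x = x := max_eq_left hx0.le
        have hεb2 : 0 ≤ ε / b ^ 2 := by positivity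
        have hy0 : 0 < y := by linarith
        have hry : relu y = y := max_eq_left hy0.le
        have hbx : b * x ≤ 1 := by
          have h1 := hterm_le u hu
          rw [hrx] at h1
          nlinarith [hw _ he]
        rw [hrx, hry]
        have hstep : w' (u, v) * (x + ε / b ^ 2) ≤ w' (u, v) * y :=
          mul_le_mul_of_nonneg_left hyx (le_trans hb.le hw'b)
        have key : w (u, v) * x ≤ w' (u, v) * (x + ε / b ^ 2) := by
          have hb2 : (0:ℝ) < b ^ 2 := by positivity
          have h1 : b * (ε / b ^ 2) = ε / b := by field_simp
          have h2 : ε * x ≤ ε / b := by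
            rw [div_eq_mul_inv]
            have : ε * (b * x) ≤ ε * 1 := mul_le_mul_of_nonneg_left hbx hε
            calc ε * x = ε * (b * x) * b⁻¹ := by field_simp
              _ ≤ ε * 1 * b⁻¹ := by
                  exact mul_le_mul_of_nonneg_right this (by positivity)
              _ = ε * b⁻¹ := by ring
          nlinarith [mul_le_mul_of_nonneg_right hww' hx0.le,
            mul_le_mul_of_nonneg_right hw'b hεb2]
        exact le_trans key hstep
    -- conclude via the minimality of t' v
    obtain ⟨s, hsle, hs1⟩ := exists_potential_eq_one G w' d' t' v hv τ hPτ
    have := (ht'.2 v hv).2 hs1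
    calc t' v ≤ s := this
      _ ≤ τ := hsle
      _ = t v + (nodeDepth G v : ℝ) * C * ε := hτ.symm

end Aux5
/-- Proposition: Lipschitz continuity of positive SNNs in their
parameters. For two positive SNNs on the same graph of depth `L`, with all synaptic
weights at least `b > 0`, and for every input `t`,
`‖R(Φ)(t) − R(Φ̃)(t)‖_∞ ≤ L·(1 + 1/b²)·‖Φ − Φ̃‖_∞`. -/
theorem statement2 {V : Type} [Fintype V] [DecidableEq V]
    (G : NetworkGraph V) {din dout : ℕ}
    (ein : Fin din → V) (eout : Fin dout → V)
    (hein : Function.Injective ein) (heinr : Set.range ein = G.Vin)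
    (heout : Function.Injective eout) (heoutr : Set.range eout = G.Vout)
    (w d w' d' : V × V → ℝ)
    (hdnn : ∀ e ∈ G.E, 0 ≤ d e) (hdnn' : ∀ e ∈ G.E, 0 ≤ d' e)
    (b : ℝ) (hb : 0 < b)
    (hw : ∀ e ∈ G.E, b ≤ w e) (hw' : ∀ e ∈ G.E, b ≤ w' e)
    (L : ℕ) (hL : G.DepthEq L)
    (t : Fin din → ℝ) :
    ‖snnReal G w d ein eout t - snnReal G w' d' ein eout t‖ ≤
      (L : ℝ) * (1 + 1 / b ^ 2) * paramDist G w d w' d' := by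
  classical
  set ε := paramDist G w d w' d' with hεdef
  have hεw : ∀ e ∈ G.E, |w e - w' e| ≤ ε ∧ |d e - d' e| ≤ ε := by
    intro e he
    have hfin : ((fun e => max |w e - w' e| |d e - d' e|) '' (G.E : Set (V × V))).Finite :=
      (G.E.finite_toSet).image _
    have hle : max |w e - w' e| |d e - d' e| ≤ ε :=
      le_csSup hfin.bddAbove (Set.mem_image_of_mem _ (by exact_mod_cast he))
    exact ⟨le_trans (le_max_left _ _) hle, le_trans (le_max_right _ _) hle⟩
  have hε : 0 ≤ ε := by
    rcases G.E.eq_empty_or_nonempty with hE | ⟨e, he⟩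
    · rw [hεdef, paramDist, hE]
      simp [Real.sSup_empty]
    · exact le_trans (abs_nonneg (w e - w' e)) (hεw e he).1
  set tin := Function.extend ein t (fun _ => 0) with htin
  have hex : ∃ t0, IsSpikeMap G w d tin t0 := exists_spikeMap G w d b hb hw tin
  have hex' : ∃ t0, IsSpikeMap G w' d' tin t0 := exists_spikeMap G w' d' b hb hw' tin
  have hRHS : 0 ≤ (L : ℝ) * (1 + 1 / b ^ 2) * ε := by positivity
  refine (pi_norm_le_iff_of_nonneg hRHS).mpr fun j => ?_
  simp only [Pi.sub_apply, snnReal, Real.norm_eq_abs]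
  rw [spikeMap, dif_pos hex, spikeMap, dif_pos hex']
  set v := eout j with hv
  have h1 := onesided G w d w' d' b hb hw hw' ε hε (fun e he => (hεw e he).1)
    (fun e he => (hεw e he).2) L hL tin _ _ hex.choose_spec hex'.choose_spec v
  have h2 := onesided G w' d' w d b hb hw' hw ε hε
    (fun e he => by rw [abs_sub_comm]; exact (hεw e he).1)
    (fun e he => by rw [abs_sub_comm]; exact (hεw e he).2)
    L hL tin _ _ hex'.choose_spec hex.choose_spec v
  have hdL : (nodeDepth G v : ℝ) ≤ (L : ℝ) := by exact_mod_cast nodeDepth_le G v hL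
  have hCε : 0 ≤ (1 + 1 / b ^ 2) * ε := by positivity
  have hmono : (nodeDepth G v : ℝ) * (1 + 1 / b ^ 2) * ε ≤ (L : ℝ) * (1 + 1 / b ^ 2) * ε := by
    rw [mul_assoc, mul_assoc]
    exact mul_le_mul_of_nonneg_right hdL hCε
  rw [abs_sub_le_iff]
  constructor <;> linarith
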